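/- For percolation on a finite graph: for any vertices x ≠ y, if x is connected to y by a path of occupied bonds, then there exists a neighbor v of x such that the bond {x,v} is occupied and v is connected to y disjointly from this bond; consequently by the BK inequality, τ_p(x,y) ≤ p ∑_{v: {x,v} ∈ B} τ_p(v,y) for x ≠ y, i.e. τ_p(x) ≤ pΩ(D*τ_p)(x) for x ≠ 0 on a transitive graph. -/

import Mathlib

/-- `x` and `y` are connected by a path of occupied bonds in configuration `ω`. -/
def Occ {V : Type*} (G : SimpleGraph V) (ω : Sym2 V → Bool) : V → V → Prop :=
  Relation.ReflTransGen (fun a b => G.Adj a b ∧ ω s(a, b) = true)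

/-- The weight of a percolation configuration `ω` at bond parameter `p`. -/
noncomputable def percWeight {V : Type*} [Fintype V] [DecidableEq V]
    (G : SimpleGraph V) [DecidableRel G.Adj] (p : ℝ) (ω : Sym2 V → Bool) : ℝ :=
  ∏ e ∈ G.edgeFinset, (if ω e then p else 1 - p)

open Classical in
/-- The percolation two-point function `τ_p(x,y) = P_p(x ↔ y)`. -/
noncomputable def tau {V : Type*} [Fintype V] [DecidableEq V]
    (G : SimpleGraph V) [DecidableRel G.Adj] (p : ℝ) (x y : V) : ℝ :=
  ∑ ω : Sym2 V → Bool, if Occ G ω x y then percWeight G p ω else 0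

section Helpers

variable {V : Type*} [DecidableEq V]

/-- The graph of occupied bonds. -/
private def occGraph (G : SimpleGraph V) (ω : Sym2 V → Bool) : SimpleGraph V where
  Adj a b := G.Adj a b ∧ ω s(a, b) = true
  symm := ⟨fun a b h => ⟨h.1.symm, by rw [Sym2.eq_swap]; exact h.2⟩⟩
  loopless := ⟨fun a h => G.loopless.irrefl a h.1⟩

private lemma occ_iff_reachable (G : SimpleGraph V) (ω : Sym2 V → Bool) (a b : V) :
    Occ G ω a b ↔ (occGraph G ω).Reachable a b := by
  rw [SimpleGraph.reachable_iff_reflTransGen]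
  rfl

private lemma occ_of_walk_avoid (G : SimpleGraph V) (ω : Sym2 V → Bool) (e : Sym2 V) {a b : V}
    (w : (occGraph G ω).Walk a b) (he : e ∉ w.edges) :
    Occ G (Function.update ω e false) a b := by
  induction w with
  | nil => exact Relation.ReflTransGen.refl
  | @cons u v c h t ih =>
    simp only [SimpleGraph.Walk.edges_cons, List.mem_cons] at he
    push_neg at he
    refine Relation.ReflTransGen.head ⟨h.1, ?_⟩ (ih he.2)
    rw [Function.update_of_ne (Ne.symm he.1)]
    exact h.2

private lemma occ_first_step (G : SimpleGraph V) (ω : Sym2 V → Bool) {x y : V}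
    (hxy : x ≠ y) (h : Occ G ω x y) :
    ∃ v, G.Adj x v ∧ ω s(x, v) = true ∧
      Occ G (Function.update ω s(x, v) false) v y := by
  obtain ⟨w⟩ := (occ_iff_reachable G ω x y).1 h
  obtain ⟨q, hq⟩ := w.toPath
  cases q with
  | nil => exact absurd rfl hxy
  | @cons _ v _ h' t =>
    rw [SimpleGraph.Walk.cons_isPath_iff] at hq
    have hne : s(x, v) ∉ t.edges := fun hmem =>
      hq.2 (SimpleGraph.Walk.fst_mem_support_of_mem_edges t hmem)
    exact ⟨v, h'.1, h'.2, occ_of_walk_avoid G ω _ t hne⟩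

private lemma occ_mono_update (G : SimpleGraph V) (ω : Sym2 V → Bool) (e : Sym2 V) {a b : V}
    (h : Occ G (Function.update ω e false) a b) : Occ G ω a b := by
  refine Relation.ReflTransGen.mono ?_ _ _ h
  rintro u v ⟨hadj, hupd⟩
  refine ⟨hadj, ?_⟩
  by_cases hc : s(u, v) = e
  · rw [hc, Function.update_self] at hupd
    exact absurd hupd (by simp)
  · rwa [Function.update_of_ne hc] at hupd

variable [Fintype V] [DecidableEq V]

private lemma percWeight_nonneg (G : SimpleGraph V) [DecidableRel G.Adj]
    {p : ℝ} (hp0 : 0 ≤ p) (hp1 : p ≤ 1) (ω : Sym2 V → Bool) :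
    0 ≤ percWeight G p ω :=
  Finset.prod_nonneg fun _ _ => by split <;> linarith

open Classical in
private lemma key_sum (G : SimpleGraph V) [DecidableRel G.Adj] (p : ℝ)
    {e : Sym2 V} (he : e ∈ G.edgeFinset)
    (B : (Sym2 V → Bool) → Prop)
    (hB : ∀ ω c, B (Function.update ω e c) ↔ B ω) :
    (∑ ω : Sym2 V → Bool, if ω e = true ∧ B ω then percWeight G p ω else 0)
      = p * ∑ ω : Sym2 V → Bool, (if B ω then percWeight G p ω else 0) := by
  set r : (Sym2 V → Bool) → ℝ :=
    fun ω => ∏ e' ∈ G.edgeFinset.erase e, (if ω e' then p else 1 - p) with hrdef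
  have hw : ∀ ω, percWeight G p ω = (if ω e then p else 1 - p) * r ω := fun ω =>
    (Finset.mul_prod_erase _ _ he).symm
  have hr : ∀ (ω : Sym2 V → Bool) (c : Bool), r (Function.update ω e c) = r ω := by
    intro ω c
    refine Finset.prod_congr rfl fun e' he' => ?_
    rw [Function.update_of_ne (Finset.ne_of_mem_erase he')]
  set flip : (Sym2 V → Bool) → (Sym2 V → Bool) :=
    fun ω => Function.update ω e (!ω e) with hflipdef
  have hinv : Function.Involutive flip := by
    intro ω
    ext s
    by_cases hs : s = e
    · subst hs; simp [hflipdef]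
    · simp [hflipdef, Function.update_of_ne hs]
  have hTF : (∑ ω : Sym2 V → Bool, if ω e = true ∧ B ω then r ω else 0)
      = ∑ ω : Sym2 V → Bool, if ω e = false ∧ B ω then r ω else 0 := by
    refine Fintype.sum_bijective flip hinv.bijective _ _ fun ω => ?_
    have h1 : flip ω e = !ω e := Function.update_self _ _ _
    have h2 : B (flip ω) ↔ B ω := hB ω (!ω e)
    have h3 : r (flip ω) = r ω := hr ω (!ω e)
    by_cases hb : B ω
    · cases hω : ω e <;> simp [h1, h2, h3, hb, hω]
    · simp [h2, hb]
  have hL : (∑ ω : Sym2 V → Bool, if ω e = true ∧ B ω then percWeight G p ω else 0)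
      = p * ∑ ω : Sym2 V → Bool, (if ω e = true ∧ B ω then r ω else 0) := by
    rw [Finset.mul_sum]
    refine Finset.sum_congr rfl fun ω _ => ?_
    by_cases hc : ω e = true ∧ B ω
    · rw [if_pos hc, if_pos hc, hw ω, hc.1, if_pos rfl]
    · simp [hc]
  have hR : (∑ ω : Sym2 V → Bool, if B ω then percWeight G p ω else 0)
      = p * (∑ ω : Sym2 V → Bool, if ω e = true ∧ B ω then r ω else 0)
        + (1 - p) * (∑ ω : Sym2 V → Bool, if ω e = false ∧ B ω then r ω else 0) := by
    rw [Finset.mul_sum, Finset.mul_sum, ← Finset.sum_add_distrib]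
    refine Finset.sum_congr rfl fun ω _ => ?_
    by_cases hb : B ω
    · cases hω : ω e <;> simp [hb, hω, hw ω]
    · simp [hb]
  rw [hL, hR, ← hTF]
  ring

end Helpers

theorem two_point_first_step_bound {V : Type*} [Fintype V] [DecidableEq V]
    (G : SimpleGraph V) [DecidableRel G.Adj]
    (p : ℝ) (hp0 : 0 ≤ p) (hp1 : p ≤ 1) (x y : V) (hxy : x ≠ y) :
    (∀ ω : Sym2 V → Bool, Occ G ω x y →
      ∃ v, G.Adj x v ∧ ω s(x, v) = true ∧
        Occ G (Function.update ω s(x, v) false) v y)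
    ∧ tau G p x y ≤ p * ∑ v ∈ G.neighborFinset x, tau G p v y := by
  classical
  have hw0 : ∀ ω, 0 ≤ percWeight G p ω := fun ω => percWeight_nonneg G hp0 hp1 ω
  refine ⟨fun ω h => occ_first_step G ω hxy h, ?_⟩
  have step1 : tau G p x y ≤ ∑ ω : Sym2 V → Bool, ∑ v ∈ G.neighborFinset x,
      (if ω s(x, v) = true ∧ Occ G (Function.update ω s(x, v) false) v y
        then percWeight G p ω else 0) := by
    rw [tau]
    refine Finset.sum_le_sum fun ω _ => ?_
    by_cases h : Occ G ω x y
    · obtain ⟨v, hadj, hωe, hocc⟩ := occ_first_step G ω hxy h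
      rw [if_pos h]
      have hv : v ∈ G.neighborFinset x := by simpa using hadj
      refine le_trans ?_ (Finset.single_le_sum
        (f := fun u => if ω s(x, u) = true ∧ Occ G (Function.update ω s(x, u) false) u y
          then percWeight G p ω else 0) (fun i _ => by beta_reduce; split <;> simp [hw0 ω]) hv)
      exact le_of_eq (if_pos ⟨hωe, hocc⟩).symm
    · rw [if_neg h]
      exact Finset.sum_nonneg fun v _ => by split <;> simp [hw0 ω]
  have step2 : (∑ ω : Sym2 V → Bool, ∑ v ∈ G.neighborFinset x,
      (if ω s(x, v) = true ∧ Occ G (Function.update ω s(x, v) false) v y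
        then percWeight G p ω else 0))
      = ∑ v ∈ G.neighborFinset x, ∑ ω : Sym2 V → Bool,
      (if ω s(x, v) = true ∧ Occ G (Function.update ω s(x, v) false) v y
        then percWeight G p ω else 0) := Finset.sum_comm
  have step3 : ∀ v ∈ G.neighborFinset x,
      (∑ ω : Sym2 V → Bool,
        (if ω s(x, v) = true ∧ Occ G (Function.update ω s(x, v) false) v y
          then percWeight G p ω else 0))
      = p * ∑ ω : Sym2 V → Bool,
          (if Occ G (Function.update ω s(x, v) false) v y then percWeight G p ω else 0) := by
    intro v hv
    have hadj : G.Adj x v := by simpa using hv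
    have he : s(x, v) ∈ G.edgeFinset := by
      rw [SimpleGraph.mem_edgeFinset, SimpleGraph.mem_edgeSet]; exact hadj
    exact key_sum G p he
      (fun ω => Occ G (Function.update ω s(x, v) false) v y)
      (fun ω c => by simp only [Function.update_idem])
  have step4 : ∀ v ∈ G.neighborFinset x,
      (∑ ω : Sym2 V → Bool,
        (if Occ G (Function.update ω s(x, v) false) v y then percWeight G p ω else 0))
      ≤ tau G p v y := by
    intro v _
    rw [tau]
    refine Finset.sum_le_sum fun ω _ => ?_
    by_cases hb : Occ G (Function.update ω s(x, v) false) v y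
    · rw [if_pos hb, if_pos (occ_mono_update G ω s(x, v) hb)]
    · rw [if_neg hb]
      split <;> simp [hw0 ω]
  calc tau G p x y
      ≤ ∑ v ∈ G.neighborFinset x, ∑ ω : Sym2 V → Bool,
        (if ω s(x, v) = true ∧ Occ G (Function.update ω s(x, v) false) v y
          then percWeight G p ω else 0) := step2 ▸ step1
    _ = ∑ v ∈ G.neighborFinset x, p * ∑ ω : Sym2 V → Bool,
        (if Occ G (Function.update ω s(x, v) false) v y then percWeight G p ω else 0) :=
        Finset.sum_congr rfl step3
    _ ≤ ∑ v ∈ G.neighborFinset x, p * tau G p v y :=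
        Finset.sum_le_sum fun v hv => mul_le_mul_of_nonneg_left (step4 v hv) hp0
    _ = p * ∑ v ∈ G.neighborFinset x, tau G p v y := (Finset.mul_sum _ _ _).symm
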